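/- arXiv:1208.5913 — 10 statements merged into one kernel-verified Lean document; each statement's English description precedes it below -/
import Mathlib

section
/- In the logic LDiiP, the self-proof of truthfulness law holds: ⊢ M ⊩_a ((M ⊩_a φ) → φ), i.e., M proves to a that if M proves φ to a then φ holds. -/
/-- Formulas of LDiiP over agents and messages. -/
inductive Fm (Agent Msg : Type) : Type where
  | atom : Nat → Fm Agent Msg
  | knows : Agent → Msg → Fm Agent Msg
  | bot : Fm Agent Msg
  | imp : Fm Agent Msg → Fm Agent Msg → Fm Agent Msg
  | and : Fm Agent Msg → Fm Agent Msg → Fm Agent Msg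
  | or : Fm Agent Msg → Fm Agent Msg → Fm Agent Msg
  | neg : Fm Agent Msg → Fm Agent Msg
  | proves : Msg → Agent → Fm Agent Msg → Fm Agent Msg

def Fm.iff {Agent Msg : Type} (p q : Fm Agent Msg) : Fm Agent Msg :=
  (p.imp q).and (q.imp p)

/-- Classical evaluation of a formula, treating atoms, knowledge atoms and
modal formulas as opaque propositions assigned by `v`. -/
def Fm.eval {Agent Msg : Type} (v : Fm Agent Msg → Prop) : Fm Agent Msg → Prop
  | .bot => False
  | .imp p q => Fm.eval v p → Fm.eval v q
  | .and p q => Fm.eval v p ∧ Fm.eval v q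
  | .or p q => Fm.eval v p ∨ Fm.eval v q
  | .neg p => ¬ Fm.eval v p
  | φ => v φ

/-- A classical (propositional) tautology schema. -/
def Fm.Taut {Agent Msg : Type} (φ : Fm Agent Msg) : Prop :=
  ∀ v, φ.eval v

/-- The logic LDiiP: a normal modal logic with proof modality `proves M a φ`
(`M ⊩_a φ`), containing all classical tautologies, with axioms of
self-knowledge, Kripke's law, epistemic truthfulness, proof consistency and
negation completeness, closed under modus ponens and necessitation. -/
structure LDiiP (Agent Msg : Type) where
  Thm : Fm Agent Msg → Prop
  taut : ∀ {φ : Fm Agent Msg}, φ.Taut → Thm φ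
  mp : ∀ {φ ψ : Fm Agent Msg}, Thm (φ.imp ψ) → Thm φ → Thm ψ
  nec : ∀ (M : Msg) (a : Agent) {φ : Fm Agent Msg}, Thm φ → Thm (.proves M a φ)
  selfKnow : ∀ (M : Msg) (a : Agent), Thm (.proves M a (.knows a M))
  kripke : ∀ (M : Msg) (a : Agent) (φ ψ : Fm Agent Msg),
    Thm ((Fm.proves M a (φ.imp ψ)).imp ((Fm.proves M a φ).imp (Fm.proves M a ψ)))
  epistemic : ∀ (M : Msg) (a : Agent) (φ : Fm Agent Msg),
    Thm ((Fm.proves M a φ).imp ((Fm.knows a M).imp φ))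
  consistency : ∀ (M : Msg) (a : Agent), Thm (Fm.neg (Fm.proves M a Fm.bot))
  negComplete : ∀ (M : Msg) (a : Agent) (φ : Fm Agent Msg),
    Thm ((Fm.proves M a φ).or (Fm.proves M a (Fm.neg φ)))

/-- Self-proof of truthfulness: ⊢ M ⊩_a ((M ⊩_a φ) → φ). -/
theorem ldiip_self_proof_of_truthfulness {Agent Msg : Type} (L : LDiiP Agent Msg)
    (M : Msg) (a : Agent) (φ : Fm Agent Msg) :
    L.Thm (Fm.proves M a ((Fm.proves M a φ).imp φ)) := by
  -- modal modus ponens via Kripke's law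
  have pmp : ∀ {A B : Fm Agent Msg}, L.Thm (Fm.proves M a (A.imp B)) →
      L.Thm (Fm.proves M a A) → L.Thm (Fm.proves M a B) := by
    intro A B h1 h2
    exact L.mp (L.mp (L.kripke M a A B) h1) h2
  set k : Fm Agent Msg := Fm.knows a M with hk
  set p : Fm Agent Msg := Fm.proves M a φ with hp
  have taut : L.Thm (k.imp (((p.imp (k.imp φ))).imp (p.imp φ))) := by
    apply L.taut
    intro v
    exact fun hk h hp => h hp hk
  have h1 : L.Thm (Fm.proves M a (k.imp (((p.imp (k.imp φ))).imp (p.imp φ)))) :=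
    L.nec M a taut
  have h2 : L.Thm (Fm.proves M a (((p.imp (k.imp φ))).imp (p.imp φ))) :=
    pmp h1 (L.selfKnow M a)
  exact pmp h2 (L.nec M a (L.epistemic M a φ))
end

section
/- In the logic LDiiP, proof density holds: ⊢ (M ⊩_a (M ⊩_a φ)) → (M ⊩_a φ). -/
/-- Proof density: ⊢ (M ⊩_a (M ⊩_a φ)) → (M ⊩_a φ). -/
theorem ldiip_proof_density {Agent Msg : Type} (L : LDiiP Agent Msg)
    (M : Msg) (a : Agent) (φ : Fm Agent Msg) :
    L.Thm ((Fm.proves M a (Fm.proves M a φ)).imp (Fm.proves M a φ)) := by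
  -- M ⊩ ((M⊩φ) → (k → φ))
  have h1 := L.nec M a (L.epistemic M a φ)
  -- (M ⊩ (M⊩φ)) → (M ⊩ (k → φ))
  have h2 := L.mp (L.kripke M a (Fm.proves M a φ) ((Fm.knows a M).imp φ)) h1
  -- (M ⊩ (k → φ)) → ((M ⊩ k) → (M ⊩ φ))
  have h3 := L.kripke M a (Fm.knows a M) φ
  have hk := L.selfKnow M a
  -- combine propositionally
  set P := Fm.proves M a (Fm.proves M a φ)
  set Q := Fm.proves M a ((Fm.knows a M).imp φ)
  set R := Fm.proves M a (Fm.knows a M)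
  set S := Fm.proves M a φ
  have ht : ((P.imp Q).imp ((Q.imp (R.imp S)).imp (R.imp (P.imp S)))).Taut := by
    intro v; simp only [Fm.eval]; tauto
  exact L.mp (L.mp (L.mp (L.taut ht) h2) h3) hk
end

section
/- In the logic LDiiP, maximal consistency holds: ⊢ (M ⊩_a ¬φ) ↔ ¬(M ⊩_a φ). -/
/-- Maximal consistency: ⊢ (M ⊩_a ¬φ) ↔ ¬(M ⊩_a φ). -/
theorem ldiip_maximal_consistency {Agent Msg : Type} (L : LDiiP Agent Msg)
    (M : Msg) (a : Agent) (φ : Fm Agent Msg) :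
    L.Thm (Fm.iff (Fm.proves M a (Fm.neg φ)) (Fm.neg (Fm.proves M a φ))) := by
  set A := Fm.proves M a (Fm.neg φ) with hA
  set B := Fm.proves M a (φ.imp Fm.bot) with hB
  set C := Fm.proves M a φ with hC
  set F := Fm.proves M a (Fm.bot : Fm Agent Msg) with hF
  have nec1 : L.Thm (Fm.proves M a ((Fm.neg φ).imp (φ.imp Fm.bot))) := by
    apply L.nec
    apply L.taut
    intro v
    simp [Fm.eval]
  have t1 : L.Thm (A.imp B) := L.mp (L.kripke M a (Fm.neg φ) (φ.imp Fm.bot)) nec1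
  have t2 : L.Thm (B.imp (C.imp F)) := L.kripke M a φ Fm.bot
  have t3 : L.Thm (Fm.neg F) := L.consistency M a
  have t4 : L.Thm (C.or A) := L.negComplete M a φ
  have big : L.Thm ((A.imp B).imp ((B.imp (C.imp F)).imp ((Fm.neg F).imp
      ((C.or A).imp (Fm.iff A (Fm.neg C)))))) := by
    apply L.taut
    intro v
    simp [Fm.eval, Fm.iff]
    tauto
  exact L.mp (L.mp (L.mp (L.mp big t1) t2) t3) t4
end

section
/- In the logic LDiiP, the internalised disjunction property holds in both directions: ⊢ (M ⊩_a (φ ∨ φ')) ↔ ((M ⊩_a φ) ∨ (M ⊩_a φ')). -/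
/-- Internalised disjunction property bis:
⊢ (M ⊩_a (φ ∨ φ')) ↔ ((M ⊩_a φ) ∨ (M ⊩_a φ')). -/
theorem ldiip_disj_distrib {Agent Msg : Type} (L : LDiiP Agent Msg)
    (M : Msg) (a : Agent) (φ φ' : Fm Agent Msg) :
    L.Thm (Fm.iff (Fm.proves M a (φ.or φ'))
      ((Fm.proves M a φ).or (Fm.proves M a φ'))) := by
  -- abbreviations
  set P := fun ψ => Fm.proves M a ψ with hP
  -- backward direction: (P φ ∨ P φ') → P (φ ∨ φ')
  have k1 : L.Thm ((Fm.proves M a φ).imp (Fm.proves M a (φ.or φ'))) :=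
    L.mp (L.kripke M a φ (φ.or φ'))
      (L.nec M a (L.taut (by intro v; simp [Fm.eval]; tauto)))
  have k2 : L.Thm ((Fm.proves M a φ').imp (Fm.proves M a (φ.or φ'))) :=
    L.mp (L.kripke M a φ' (φ.or φ'))
      (L.nec M a (L.taut (by intro v; simp [Fm.eval]; tauto)))
  have back : L.Thm (((Fm.proves M a φ).or (Fm.proves M a φ')).imp
      (Fm.proves M a (φ.or φ'))) := by
    have t : L.Thm (((Fm.proves M a φ).imp (Fm.proves M a (φ.or φ'))).imp
        (((Fm.proves M a φ').imp (Fm.proves M a (φ.or φ'))).imp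
          (((Fm.proves M a φ).or (Fm.proves M a φ')).imp
            (Fm.proves M a (φ.or φ'))))) :=
      L.taut (by intro v; simp [Fm.eval]; tauto)
    exact L.mp (L.mp t k1) k2
  -- forward direction
  have h1 : L.Thm ((Fm.proves M a (φ.neg)).imp
      (Fm.proves M a ((φ.or φ').imp φ'))) :=
    L.mp (L.kripke M a φ.neg ((φ.or φ').imp φ'))
      (L.nec M a (L.taut (by intro v; simp [Fm.eval]; tauto)))
  have h2 := L.kripke M a (φ.or φ') φ'
  have h3 := L.negComplete M a φ
  have fwd : L.Thm ((Fm.proves M a (φ.or φ')).imp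
      ((Fm.proves M a φ).or (Fm.proves M a φ'))) := by
    have t : L.Thm (((Fm.proves M a (φ.neg)).imp
        (Fm.proves M a ((φ.or φ').imp φ'))).imp
        (((Fm.proves M a ((φ.or φ').imp φ')).imp
          ((Fm.proves M a (φ.or φ')).imp (Fm.proves M a φ'))).imp
        (((Fm.proves M a φ).or (Fm.proves M a (φ.neg))).imp
        ((Fm.proves M a (φ.or φ')).imp
          ((Fm.proves M a φ).or (Fm.proves M a φ')))))) :=
      L.taut (by intro v; simp [Fm.eval]; tauto)
    exact L.mp (L.mp (L.mp t h1) h2) h3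
  -- combine
  have comb : L.Thm (((Fm.proves M a (φ.or φ')).imp
      ((Fm.proves M a φ).or (Fm.proves M a φ'))).imp
      ((((Fm.proves M a φ).or (Fm.proves M a φ')).imp
        (Fm.proves M a (φ.or φ'))).imp
      (Fm.iff (Fm.proves M a (φ.or φ'))
        ((Fm.proves M a φ).or (Fm.proves M a φ'))))) :=
    L.taut (by intro v; simp [Fm.iff, Fm.eval]; tauto)
  exact L.mp (L.mp comb fwd) back
end

section
/- In the logic LDiiP, the proof modality distributes over implication in both directions: ⊢ (M ⊩_a (φ → φ')) ↔ ((M ⊩_a φ) → (M ⊩_a φ')). -/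
/-- K bis: ⊢ (M ⊩_a (φ → φ')) ↔ ((M ⊩_a φ) → (M ⊩_a φ')). -/
theorem ldiip_imp_distrib {Agent Msg : Type} (L : LDiiP Agent Msg)
    (M : Msg) (a : Agent) (φ φ' : Fm Agent Msg) :
    L.Thm (Fm.iff (Fm.proves M a (φ.imp φ'))
      ((Fm.proves M a φ).imp (Fm.proves M a φ'))) := by
  -- forward direction: Kripke's law
  have fwd := L.kripke M a φ φ'
  -- ⊢ P(φ' → (φ → φ'))
  have h1 : L.Thm (Fm.proves M a (φ'.imp (φ.imp φ'))) :=
    L.nec M a (L.taut (by intro v; dsimp [Fm.eval]; tauto))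
  have h1' : L.Thm ((Fm.proves M a φ').imp (Fm.proves M a (φ.imp φ'))) :=
    L.mp (L.kripke M a φ' (φ.imp φ')) h1
  -- ⊢ P(¬φ → (φ → φ'))
  have h2 : L.Thm (Fm.proves M a ((Fm.neg φ).imp (φ.imp φ'))) :=
    L.nec M a (L.taut (by intro v; dsimp [Fm.eval]; tauto))
  have h2' : L.Thm ((Fm.proves M a (Fm.neg φ)).imp (Fm.proves M a (φ.imp φ'))) :=
    L.mp (L.kripke M a (Fm.neg φ) (φ.imp φ')) h2
  have h3 := L.negComplete M a φ
  -- combine via a propositional tautology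
  have comb : L.Thm (((Fm.proves M a φ').imp (Fm.proves M a (φ.imp φ'))).imp
      ((((Fm.proves M a (Fm.neg φ)).imp (Fm.proves M a (φ.imp φ')))).imp
        (((Fm.proves M a φ).or (Fm.proves M a (Fm.neg φ))).imp
          (((Fm.proves M a φ).imp (Fm.proves M a φ')).imp
            (Fm.proves M a (φ.imp φ')))))) :=
    L.taut (by intro v; dsimp [Fm.eval]; tauto)
  have bwd : L.Thm (((Fm.proves M a φ).imp (Fm.proves M a φ')).imp
      (Fm.proves M a (φ.imp φ'))) :=
    L.mp (L.mp (L.mp comb h1') h2') h3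
  -- conjoin
  have conj : L.Thm (((Fm.proves M a (φ.imp φ')).imp
        ((Fm.proves M a φ).imp (Fm.proves M a φ'))).imp
      ((((Fm.proves M a φ).imp (Fm.proves M a φ')).imp
          (Fm.proves M a (φ.imp φ'))).imp
        (Fm.iff (Fm.proves M a (φ.imp φ'))
          ((Fm.proves M a φ).imp (Fm.proves M a φ'))))) :=
    L.taut (by intro v; dsimp [Fm.iff, Fm.eval]; tauto)
  exact L.mp (L.mp conj fwd) bwd
end

section
/- In the logic LDiiP, modal idempotency holds: ⊢ (M ⊩_a (M ⊩_a φ)) ↔ (M ⊩_a φ). -/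
/-- Hypothetical syllogism in LDiiP. -/
private lemma ldiip_syll {Agent Msg : Type} (L : LDiiP Agent Msg)
    {p q r : Fm Agent Msg} (h1 : L.Thm (p.imp q)) (h2 : L.Thm (q.imp r)) :
    L.Thm (p.imp r) := by
  have t : L.Thm ((p.imp q).imp ((q.imp r).imp (p.imp r))) := by
    apply L.taut; intro v; simp only [Fm.eval]; tauto
  exact L.mp (L.mp t h1) h2

/-- Direction 1: ⊢ M ⊩ (M ⊩ ψ) → M ⊩ ψ. -/
private lemma ldiip_dir1 {Agent Msg : Type} (L : LDiiP Agent Msg)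
    (M : Msg) (a : Agent) (ψ : Fm Agent Msg) :
    L.Thm ((Fm.proves M a (Fm.proves M a ψ)).imp (Fm.proves M a ψ)) := by
  set K : Fm Agent Msg := (Fm.knows a M).imp ψ with hK
  have e1 : L.Thm ((Fm.proves M a (Fm.proves M a ψ)).imp (Fm.proves M a K)) :=
    L.mp (L.kripke M a (Fm.proves M a ψ) K) (L.nec M a (L.epistemic M a ψ))
  have e2 := L.kripke M a (Fm.knows a M) ψ
  have sk := L.selfKnow M a
  have t : L.Thm (((Fm.proves M a K).imp ((Fm.proves M a (Fm.knows a M)).imp (Fm.proves M a ψ))).imp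
      ((Fm.proves M a (Fm.knows a M)).imp ((Fm.proves M a K).imp (Fm.proves M a ψ)))) := by
    apply L.taut; intro v; simp only [Fm.eval]; tauto
  have e3 : L.Thm ((Fm.proves M a K).imp (Fm.proves M a ψ)) :=
    L.mp (L.mp t e2) sk
  exact ldiip_syll L e1 e3

/-- Modal idempotency: ⊢ (M ⊩_a (M ⊩_a φ)) ↔ (M ⊩_a φ). -/
theorem ldiip_modal_idempotency {Agent Msg : Type} (L : LDiiP Agent Msg)
    (M : Msg) (a : Agent) (φ : Fm Agent Msg) :
    L.Thm (Fm.iff (Fm.proves M a (Fm.proves M a φ)) (Fm.proves M a φ)) := by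
  set A : Fm Agent Msg := Fm.proves M a φ with hA
  set B : Fm Agent Msg := Fm.proves M a (Fm.neg φ) with hB
  -- ⊢ M⊩¬A → M⊩B
  have b0 : L.Thm ((Fm.proves M a (A.or B)).imp (Fm.proves M a ((A.neg).imp B))) := by
    have t1 : L.Thm ((A.or B).imp ((A.neg).imp B)) := by
      apply L.taut; intro v; simp only [Fm.eval]; tauto
    exact L.mp (L.kripke M a (A.or B) ((A.neg).imp B)) (L.nec M a t1)
  have b0' : L.Thm (Fm.proves M a ((A.neg).imp B)) :=
    L.mp b0 (L.nec M a (L.negComplete M a φ))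
  have b1 : L.Thm ((Fm.proves M a (A.neg)).imp (Fm.proves M a B)) :=
    L.mp (L.kripke M a (A.neg) B) b0'
  have b2 : L.Thm ((Fm.proves M a B).imp B) := ldiip_dir1 L M a (Fm.neg φ)
  have b3 : L.Thm ((Fm.proves M a (A.neg)).imp B) := ldiip_syll L b1 b2
  -- ⊢ A → (B → M⊩⊥)
  have t2 : L.Thm (φ.imp ((φ.neg).imp Fm.bot)) := by
    apply L.taut; intro v; simp only [Fm.eval]; tauto
  have c1 : L.Thm (A.imp (Fm.proves M a ((φ.neg).imp Fm.bot))) :=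
    L.mp (L.kripke M a φ ((φ.neg).imp Fm.bot)) (L.nec M a t2)
  have c2 := L.kripke M a (φ.neg) Fm.bot
  have c3 : L.Thm (A.imp (B.imp (Fm.proves M a Fm.bot))) := ldiip_syll L c1 c2
  -- combine to get introspection A → M⊩A
  have h15 := L.consistency M a
  have h16 := L.negComplete M a A
  have intro1 : L.Thm (A.imp (Fm.proves M a A)) := by
    have t3 : L.Thm ((A.imp (B.imp (Fm.proves M a Fm.bot))).imp
        ((Fm.neg (Fm.proves M a Fm.bot)).imp
        (((Fm.proves M a A).or (Fm.proves M a (A.neg))).imp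
        (((Fm.proves M a (A.neg)).imp B).imp (A.imp (Fm.proves M a A)))))) := by
      apply L.taut; intro v; simp only [Fm.eval]; tauto
    exact L.mp (L.mp (L.mp (L.mp t3 c3) h15) h16) b3
  have dir1 : L.Thm ((Fm.proves M a A).imp A) := ldiip_dir1 L M a φ
  have t4 : L.Thm (((Fm.proves M a A).imp A).imp ((A.imp (Fm.proves M a A)).imp
      (Fm.iff (Fm.proves M a A) A))) := by
    apply L.taut; intro v; simp only [Fm.iff, Fm.eval]; tauto
  exact L.mp (L.mp t4 dir1) intro1
end

section
/- In the logic LDiiP, modal idempotency bis holds: ⊢ k_b(M) → ((M ⊩_b (M ⊩_a φ)) ↔ (M ⊩_a φ)), for any two agents a and b. -/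
/-- Modal idempotency bis: ⊢ k_b(M) → ((M ⊩_b (M ⊩_a φ)) ↔ (M ⊩_a φ)). -/
theorem ldiip_modal_idempotency_bis {Agent Msg : Type} (L : LDiiP Agent Msg)
    (M : Msg) (a b : Agent) (φ : Fm Agent Msg) :
    L.Thm ((Fm.knows b M).imp
      (Fm.iff (Fm.proves M b (Fm.proves M a φ)) (Fm.proves M a φ))) := by
  set A : Fm Agent Msg := Fm.proves M a φ with hA
  have h1 := L.epistemic M b A
  have h2 := L.epistemic M b (Fm.neg A)
  have h3 := L.negComplete M b A
  have t : L.Thm (((Fm.proves M b A).imp ((Fm.knows b M).imp A)).imp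
      (((Fm.proves M b (Fm.neg A)).imp ((Fm.knows b M).imp (Fm.neg A))).imp
        (((Fm.proves M b A).or (Fm.proves M b (Fm.neg A))).imp
          ((Fm.knows b M).imp (Fm.iff (Fm.proves M b A) A))))) := by
    apply L.taut
    intro v
    simp only [Fm.eval, Fm.iff]
    tauto
  exact L.mp (L.mp (L.mp t h1) h2) h3
end

section
/- In the logic LDiiP, the modality M ⊩_a satisfies the 5-law (negative introspection): ⊢ ¬(M ⊩_a φ) → (M ⊩_a ¬(M ⊩_a φ)). Hence M ⊩_a is a KD45 modality. -/
namespace LDiiPAux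

variable {Agent Msg : Type}

/-- Derive a theorem from a theorem via a tautological implication. -/
lemma mp1 (L : LDiiP Agent Msg) {a b : Fm Agent Msg}
    (h : (a.imp b).Taut) (ha : L.Thm a) : L.Thm b :=
  L.mp (L.taut h) ha

/-- Derive a theorem from two theorems via a tautological implication. -/
lemma mp2 (L : LDiiP Agent Msg) {a b c : Fm Agent Msg}
    (h : (a.imp (b.imp c)).Taut) (ha : L.Thm a) (hb : L.Thm b) : L.Thm c :=
  L.mp (mp1 L h ha) hb

/-- Derive a theorem from three theorems via a tautological implication. -/
lemma mp3 (L : LDiiP Agent Msg) {a b c d : Fm Agent Msg}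
    (h : (a.imp (b.imp (c.imp d))).Taut) (ha : L.Thm a) (hb : L.Thm b)
    (hc : L.Thm c) : L.Thm d :=
  L.mp (mp2 L h ha hb) hc

/-- Derive a theorem from four theorems via a tautological implication. -/
lemma mp4 (L : LDiiP Agent Msg) {a b c d e : Fm Agent Msg}
    (h : (a.imp (b.imp (c.imp (d.imp e)))).Taut) (ha : L.Thm a) (hb : L.Thm b)
    (hc : L.Thm c) (hd : L.Thm d) : L.Thm e :=
  L.mp (mp3 L h ha hb hc) hd

end LDiiPAux

/-- The 5-law (negative introspection): ⊢ ¬(M ⊩_a φ) → (M ⊩_a ¬(M ⊩_a φ));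
together with the 4-law, so that `M ⊩_a` is a KD45 modality (K, D being axioms). -/
theorem ldiip_five_law {Agent Msg : Type} (L : LDiiP Agent Msg)
    (M : Msg) (a : Agent) (φ : Fm Agent Msg) :
    L.Thm ((Fm.neg (Fm.proves M a φ)).imp
        (Fm.proves M a (Fm.neg (Fm.proves M a φ)))) ∧
    L.Thm ((Fm.proves M a φ).imp (Fm.proves M a (Fm.proves M a φ))) := by
  set K : Fm Agent Msg := Fm.knows a M with hK
  have PK : L.Thm (Fm.proves M a K) := L.selfKnow M a
  -- if ⊢ ψ → χ (as a theorem), then ⊢ Pψ → Pχ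
  have mono : ∀ ψ χ : Fm Agent Msg, L.Thm (ψ.imp χ) →
      L.Thm ((Fm.proves M a ψ).imp (Fm.proves M a χ)) := fun ψ χ h =>
    L.mp (L.kripke M a ψ χ) (L.nec M a h)
  -- discharge a K inside the modality:  ⊢ P(K → ψ) → Pψ
  have dischK : ∀ ψ : Fm Agent Msg,
      L.Thm ((Fm.proves M a (K.imp ψ)).imp (Fm.proves M a ψ)) := by
    intro ψ
    refine LDiiPAux.mp2 L ?_ (L.kripke M a K ψ) PK
    intro v; simp only [Fm.eval]; tauto
  -- L1 : ⊢ P¬ψ → P¬Pψ  for any ψ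
  have L1 : ∀ ψ : Fm Agent Msg,
      L.Thm ((Fm.proves M a (Fm.neg ψ)).imp
        (Fm.proves M a (Fm.neg (Fm.proves M a ψ)))) := by
    intro ψ
    -- S1 : ⊢ ¬ψ → (K → ¬Pψ)  from epistemic truthfulness
    have S1 : L.Thm ((Fm.neg ψ).imp (K.imp (Fm.neg (Fm.proves M a ψ)))) := by
      refine LDiiPAux.mp1 L ?_ (L.epistemic M a ψ)
      intro v; simp only [Fm.eval]; tauto
    have S2 := mono _ _ S1
    -- compose S2 : P¬ψ → P(K→¬Pψ)  with  dischK
    refine LDiiPAux.mp2 L ?_ S2 (dischK (Fm.neg (Fm.proves M a ψ)))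
    intro v; simp only [Fm.eval]; tauto
  -- the 5-law from negation completeness and L1
  have five : L.Thm ((Fm.neg (Fm.proves M a φ)).imp
      (Fm.proves M a (Fm.neg (Fm.proves M a φ)))) := by
    refine LDiiPAux.mp2 L ?_ (L.negComplete M a φ) (L1 φ)
    intro v; simp only [Fm.eval]; tauto
  refine ⟨five, ?_⟩
  -- 4-law
  -- T1 : ⊢ ¬Pφ → (K → ¬φ)  (relative completeness, from negComplete + epistemic)
  have T1 : L.Thm ((Fm.neg (Fm.proves M a φ)).imp (K.imp (Fm.neg φ))) := by
    refine LDiiPAux.mp2 L ?_ (L.negComplete M a φ) (L.epistemic M a (Fm.neg φ))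
    intro v; simp only [Fm.eval]; tauto
  -- T2 : ⊢ P¬Pφ → P¬φ
  have T2 : L.Thm ((Fm.proves M a (Fm.neg (Fm.proves M a φ))).imp
      (Fm.proves M a (Fm.neg φ))) := by
    refine LDiiPAux.mp2 L ?_ (mono _ _ T1) (dischK (Fm.neg φ))
    intro v; simp only [Fm.eval]; tauto
  -- T3 : ⊢ Pφ → (P¬φ → P⊥)
  have T3 : L.Thm ((Fm.proves M a φ).imp
      ((Fm.proves M a (Fm.neg φ)).imp (Fm.proves M a Fm.bot))) := by
    have t : L.Thm (φ.imp ((Fm.neg φ).imp Fm.bot)) := by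
      refine L.taut ?_
      intro v; simp only [Fm.eval]; tauto
    have s1 := mono _ _ t
    refine LDiiPAux.mp2 L ?_ s1 (L.kripke M a (Fm.neg φ) Fm.bot)
    intro v; simp only [Fm.eval]; tauto
  -- combine: from PPφ ∨ P¬Pφ, T2, T3 and consistency get Pφ → PPφ
  refine LDiiPAux.mp4 L ?_ (L.negComplete M a (Fm.proves M a φ)) T2 T3
    (L.consistency M a)
  intro v; simp only [Fm.eval]; tauto
end

section
/- Soundness of the LDiiP-specific axioms: in any Kripke model whose accessibility relations →_{M,a} are serial, functional, conditionally reflexive (M ∈ K_a(s) implies s →_{M,a} s), and satisfy the epistemic-image property (s →_{M,a} s' implies M ∈ K_a(s')), and where the valuation of the atom k_a(M) at state s is 'M ∈ K_a(s)', the following are valid at every state: (i) M ⊩_a k_a(M); (ii) (M ⊩_a φ) → (k_a(M) → φ); (iii) ¬(M ⊩_a ⊥); (iv) (M ⊩_a φ) ∨ (M ⊩_a ¬φ), where M ⊩_a φ is true at s iff φ is true at every →_{M,a}-successor of s. -/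
/-- Kripke satisfaction: `proves M a` is the necessity modality for the
accessibility relation `acc M a`, and the atom `knows a M` holds at `s`
iff `M ∈ K a s`. -/
def sat {Agent Msg S : Type} (acc : Msg → Agent → S → S → Prop)
    (K : Agent → S → Set Msg) (V : Nat → S → Prop) :
    S → Fm Agent Msg → Prop
  | s, .atom n => V n s
  | s, .knows a M => M ∈ K a s
  | _, .bot => False
  | s, .imp p q => sat acc K V s p → sat acc K V s q
  | s, .and p q => sat acc K V s p ∧ sat acc K V s q
  | s, .or p q => sat acc K V s p ∨ sat acc K V s q
  | s, .neg p => ¬ sat acc K V s p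
  | s, .proves M a p => ∀ s', acc M a s s' → sat acc K V s' p

/-- Soundness of the LDiiP-specific axioms in any Kripke model whose
accessibility relations are serial, functional, conditionally reflexive and
satisfy the epistemic-image property: (i) self-knowledge, (ii) epistemic
truthfulness, (iii) proof consistency, (iv) negation completeness are valid
at every state. -/
theorem ldiip_axioms_sound {Agent Msg S : Type}
    (acc : Msg → Agent → S → S → Prop)
    (K : Agent → S → Set Msg) (V : Nat → S → Prop)
    (hserial : ∀ (M : Msg) (a : Agent) (s : S), ∃ s', acc M a s s')
    (hfunc : ∀ (M : Msg) (a : Agent) (s s' s'' : S),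
      acc M a s s' → acc M a s s'' → s' = s'')
    (hcondRefl : ∀ (M : Msg) (a : Agent) (s : S), M ∈ K a s → acc M a s s)
    (hepiImg : ∀ (M : Msg) (a : Agent) (s s' : S), acc M a s s' → M ∈ K a s') :
    ∀ (s : S) (M : Msg) (a : Agent) (φ : Fm Agent Msg),
      sat acc K V s (Fm.proves M a (Fm.knows a M)) ∧
      sat acc K V s ((Fm.proves M a φ).imp ((Fm.knows a M).imp φ)) ∧
      sat acc K V s (Fm.neg (Fm.proves M a Fm.bot)) ∧
      sat acc K V s ((Fm.proves M a φ).or (Fm.proves M a (Fm.neg φ))) := by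
  intro s M a φ
  refine ⟨?_, ?_, ?_, ?_⟩
  · intro s' h; exact hepiImg M a s s' h
  · intro hp hk
    exact hp s (hcondRefl M a s hk)
  · intro hp
    obtain ⟨s', h⟩ := hserial M a s
    exact hp s' h
  · obtain ⟨s', h⟩ := hserial M a s
    by_cases hφ : sat acc K V s' φ
    · left; intro t ht; rwa [hfunc M a s t s' ht h]
    · right; intro t ht; rwa [hfunc M a s t s' ht h]
end

section
/- Minimal filtration preserves the LDiiP frame conditions: given a Kripke model with serial, functional, conditionally reflexive accessibility relations satisfying the epistemic-image property, its minimal filtration through a finite set Γ of formulas (states quotiented by agreement on Γ, with relation [s] →^{min} [s'] iff there exist representatives with s →s', and knowledge defined via the valuation of k_a(M)) is again serial and satisfies conditional reflexivity and the epistemic-image property; hence every satisfiable LDiiP-formula is satisfiable in a finite model. -/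
/-- A Kripke model for LDiiP: serial, functional, conditionally reflexive
accessibility relations satisfying the epistemic-image property. -/
structure KModel (Agent Msg : Type) where
  S : Type
  acc : Msg → Agent → S → S → Prop
  K : Agent → S → Set Msg
  V : Nat → S → Prop
  serial : ∀ (M : Msg) (a : Agent) (s : S), ∃ s', acc M a s s'
  func : ∀ (M : Msg) (a : Agent) (s s' s'' : S),
    acc M a s s' → acc M a s s'' → s' = s''
  condRefl : ∀ (M : Msg) (a : Agent) (s : S), M ∈ K a s → acc M a s s
  epiImg : ∀ (M : Msg) (a : Agent) (s s' : S), acc M a s s' → M ∈ K a s'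

/-- Agreement of two states on all formulas of `Γ` (the filtration
equivalence `∼_Γ`). -/
def simΓ {Agent Msg : Type} (Mo : KModel Agent Msg) (Γ : Set (Fm Agent Msg))
    (s s' : Mo.S) : Prop :=
  ∀ γ ∈ Γ, (sat Mo.acc Mo.K Mo.V s γ ↔ sat Mo.acc Mo.K Mo.V s' γ)

/-- The minimal-filtration relation, expressed on representatives:
`[s] →min [t]` iff some `u ∼_Γ s` and `v ∼_Γ t` satisfy `u → v`. -/
def accMin {Agent Msg : Type} (Mo : KModel Agent Msg) (Γ : Set (Fm Agent Msg))
    (M : Msg) (a : Agent) (s t : Mo.S) : Prop :=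
  ∃ u v : Mo.S, simΓ Mo Γ u s ∧ simΓ Mo Γ v t ∧ Mo.acc M a u v

namespace LDiiPAux

variable {Agent Msg : Type}

attribute [local instance] Classical.propDecidable

/-- Subformula list, also collecting `knows a M` for each `proves M a ψ`. -/
def subL : Fm Agent Msg → List (Fm Agent Msg)
  | .atom n => [.atom n]
  | .knows a M => [.knows a M]
  | .bot => [.bot]
  | .imp p q => .imp p q :: (subL p ++ subL q)
  | .and p q => .and p q :: (subL p ++ subL q)
  | .or p q => .or p q :: (subL p ++ subL q)
  | .neg p => .neg p :: subL p
  | .proves M a p => .proves M a p :: .knows a M :: subL p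

lemma self_mem (γ : Fm Agent Msg) : γ ∈ subL γ := by
  cases γ <;> simp [subL]

lemma sub_trans : ∀ φ γ : Fm Agent Msg, γ ∈ subL φ → subL γ ⊆ subL φ := by
  intro φ
  induction φ with
  | atom n => intro γ h; simp [subL] at h; subst h; exact fun _ h => h
  | knows a M => intro γ h; simp [subL] at h; subst h; exact fun _ h => h
  | bot => intro γ h; simp [subL] at h; subst h; exact fun _ h => h
  | imp p q ih1 ih2 =>
      intro γ h; simp [subL] at h
      rcases h with h | h | h
      · subst h; exact fun _ h => h
      · intro x hx; simp [subL]; exact Or.inr (Or.inl (ih1 γ h hx))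
      · intro x hx; simp [subL]; exact Or.inr (Or.inr (ih2 γ h hx))
  | and p q ih1 ih2 =>
      intro γ h; simp [subL] at h
      rcases h with h | h | h
      · subst h; exact fun _ h => h
      · intro x hx; simp [subL]; exact Or.inr (Or.inl (ih1 γ h hx))
      · intro x hx; simp [subL]; exact Or.inr (Or.inr (ih2 γ h hx))
  | or p q ih1 ih2 =>
      intro γ h; simp [subL] at h
      rcases h with h | h | h
      · subst h; exact fun _ h => h
      · intro x hx; simp [subL]; exact Or.inr (Or.inl (ih1 γ h hx))
      · intro x hx; simp [subL]; exact Or.inr (Or.inr (ih2 γ h hx))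
  | neg p ih =>
      intro γ h; simp [subL] at h
      rcases h with h | h
      · subst h; exact fun _ h => h
      · intro x hx; simp [subL]; exact Or.inr (ih γ h hx)
  | proves M a p ih =>
      intro γ h; simp [subL] at h
      rcases h with h | h | h
      · subst h; exact fun _ h => h
      · subst h; intro x hx; simp [subL] at hx; subst hx; simp [subL]
      · intro x hx; simp [subL]; exact Or.inr (Or.inr (ih γ h hx))

/-- The setoid of agreement on a list of formulas. -/
def sd (Mo : KModel Agent Msg) (Δ : List (Fm Agent Msg)) : Setoid Mo.S :=
  ⟨fun s t => ∀ γ ∈ Δ, (sat Mo.acc Mo.K Mo.V s γ ↔ sat Mo.acc Mo.K Mo.V t γ),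
   ⟨fun _ _ _ => Iff.rfl, fun h γ hγ => (h γ hγ).symm,
    fun h h' γ hγ => (h γ hγ).trans (h' γ hγ)⟩⟩

/-- The unique successor. -/
noncomputable def nxt (Mo : KModel Agent Msg) (M : Msg) (a : Agent) (s : Mo.S) : Mo.S :=
  (Mo.serial M a s).choose

lemma nxt_spec (Mo : KModel Agent Msg) (M : Msg) (a : Agent) (s : Mo.S) :
    Mo.acc M a s (nxt Mo M a s) := (Mo.serial M a s).choose_spec

lemma acc_iff (Mo : KModel Agent Msg) (M : Msg) (a : Agent) (s t : Mo.S) :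
    Mo.acc M a s t ↔ t = nxt Mo M a s := by
  constructor
  · intro h; exact Mo.func M a s t _ h (nxt_spec Mo M a s)
  · rintro rfl; exact nxt_spec Mo M a s

lemma out_sim (Mo : KModel Agent Msg) (Δ : List (Fm Agent Msg)) (s : Mo.S) :
    (sd Mo Δ).r (Quotient.out (s := sd Mo Δ) (Quotient.mk (sd Mo Δ) s)) s := by
  have := Quotient.mk_out (s := sd Mo Δ) s
  exact this

/-- The filtered finite model. -/
noncomputable def FMo (Mo : KModel Agent Msg) (Δ : List (Fm Agent Msg)) :
    KModel Agent Msg where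
  S := Quotient (sd Mo Δ)
  acc M a C D :=
    if Fm.knows a M ∈ Δ then D = Quotient.mk (sd Mo Δ) (nxt Mo M a C.out) else D = C
  K a C := {M | if Fm.knows a M ∈ Δ then M ∈ Mo.K a C.out else True}
  V n C := Mo.V n C.out
  serial := by
    intro M a C
    by_cases h : Fm.knows a M ∈ Δ <;> simp [h]
  func := by
    intro M a C D D' h1 h2
    by_cases h : Fm.knows a M ∈ Δ <;> simp [h] at h1 h2 <;> rw [h1, h2]
  condRefl := by
    intro M a C hK
    by_cases h : Fm.knows a M ∈ Δ <;> simp [h] at hK ⊢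
    have : Mo.acc M a C.out C.out := Mo.condRefl M a C.out hK
    rw [acc_iff] at this
    rw [← this, Quotient.out_eq]
  epiImg := by
    intro M a C D h1
    by_cases h : Fm.knows a M ∈ Δ <;> simp [h] at h1 ⊢
    subst h1
    have hK : M ∈ Mo.K a (nxt Mo M a C.out) := Mo.epiImg M a _ _ (nxt_spec Mo M a C.out)
    have hsim := out_sim Mo Δ (nxt Mo M a C.out)
    have := hsim (Fm.knows a M) h
    exact (this.mpr hK)

/-- Filtration lemma for the filtered model. -/
lemma filt (Mo : KModel Agent Msg) (Δ : List (Fm Agent Msg))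
    (hcl : ∀ γ ∈ Δ, subL γ ⊆ Δ) :
    ∀ γ ∈ Δ, ∀ s : Mo.S,
      sat (FMo Mo Δ).acc (FMo Mo Δ).K (FMo Mo Δ).V (Quotient.mk (sd Mo Δ) s) γ ↔
        sat Mo.acc Mo.K Mo.V s γ := by
  intro γ
  induction γ with
  | atom n =>
      intro hγ s
      have hsim := out_sim Mo Δ s
      exact hsim (.atom n) hγ
  | knows a M =>
      intro hγ s
      have hsim := out_sim Mo Δ s
      show (if Fm.knows a M ∈ Δ then
          M ∈ Mo.K a (Quotient.mk (sd Mo Δ) s).out else True) ↔ _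
      rw [if_pos hγ]
      exact hsim (.knows a M) hγ
  | bot => intro _ _; exact Iff.rfl
  | imp p q ih1 ih2 =>
      intro hγ s
      have hp : p ∈ Δ := hcl _ hγ (by simp [subL, self_mem])
      have hq : q ∈ Δ := hcl _ hγ (by simp [subL, self_mem])
      exact imp_congr (ih1 hp s) (ih2 hq s)
  | and p q ih1 ih2 =>
      intro hγ s
      have hp : p ∈ Δ := hcl _ hγ (by simp [subL, self_mem])
      have hq : q ∈ Δ := hcl _ hγ (by simp [subL, self_mem])
      exact and_congr (ih1 hp s) (ih2 hq s)
  | or p q ih1 ih2 =>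
      intro hγ s
      have hp : p ∈ Δ := hcl _ hγ (by simp [subL, self_mem])
      have hq : q ∈ Δ := hcl _ hγ (by simp [subL, self_mem])
      exact or_congr (ih1 hp s) (ih2 hq s)
  | neg p ih =>
      intro hγ s
      have hp : p ∈ Δ := hcl _ hγ (by simp [subL, self_mem])
      exact not_congr (ih hp s)
  | proves M a p ih =>
      intro hγ s
      have hp : p ∈ Δ := hcl _ hγ (by simp [subL, self_mem])
      have hk : Fm.knows a M ∈ Δ := hcl _ hγ (by simp [subL])
      have hsim := out_sim Mo Δ s
      set u := (Quotient.mk (sd Mo Δ) s).out with hu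
      constructor
      · intro h
        intro t ht
        have hsat := h (Quotient.mk (sd Mo Δ) (nxt Mo M a u)) (by
          show ite _ _ _
          rw [if_pos hk])
        have := (ih hp (nxt Mo M a u)).mp hsat
        have husucc : sat Mo.acc Mo.K Mo.V u (.proves M a p) := by
          intro t' ht'
          rw [acc_iff] at ht'; subst ht'; exact this
        exact (hsim (.proves M a p) hγ).mp husucc t ht
      · intro h D hD
        have hDeq : D = Quotient.mk (sd Mo Δ) (nxt Mo M a u) := by
          have : ite (Fm.knows a M ∈ Δ)
            (D = Quotient.mk (sd Mo Δ) (nxt Mo M a u)) (D = Quotient.mk (sd Mo Δ) s) := hD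
          rwa [if_pos hk] at this
        subst hDeq
        have husucc : sat Mo.acc Mo.K Mo.V u (.proves M a p) :=
          (hsim (.proves M a p) hγ).mpr h
        have : sat Mo.acc Mo.K Mo.V (nxt Mo M a u) p :=
          husucc _ (nxt_spec Mo M a u)
        exact (ih hp (nxt Mo M a u)).mpr this

lemma fin_FMo (Mo : KModel Agent Msg) (Δ : List (Fm Agent Msg)) :
    Finite (FMo Mo Δ).S := by
  have hfin : Finite {γ // γ ∈ Δ} := (Δ.finite_toSet).to_subtype
  let f : Quotient (sd Mo Δ) → ({γ // γ ∈ Δ} → Prop) :=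
    Quotient.lift (fun s γ => sat Mo.acc Mo.K Mo.V s γ.1)
      (by intro s t hst; funext γ; exact propext (hst γ.1 γ.2))
  have hinj : Function.Injective f := by
    intro C D h
    induction C using Quotient.ind
    induction D using Quotient.ind
    rename_i s t
    apply Quotient.sound
    intro γ hγ
    have := congrFun h ⟨γ, hγ⟩
    exact iff_of_eq this
  exact Finite.of_injective f hinj

end LDiiPAux
/-- Minimal filtration through a finite, suitably closed set `Γ` preserves
the LDiiP frame conditions (seriality, conditional reflexivity and the
epistemic-image property, with the knowledge of a class given by the
valuation of `knows a M`); hence every satisfiable LDiiP-formula is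
satisfiable in a finite model. -/
theorem minimal_filtration_preserves_ldiip {Agent Msg : Type}
    (Mo : KModel Agent Msg) (Γ : Set (Fm Agent Msg)) (hfin : Γ.Finite)
    (hsub : ∀ (M : Msg) (a : Agent) (ψ : Fm Agent Msg),
      Fm.proves M a ψ ∈ Γ → Fm.knows a M ∈ Γ) :
    (∀ (M : Msg) (a : Agent) (s : Mo.S), ∃ t, accMin Mo Γ M a s t) ∧
    (∀ (M : Msg) (a : Agent) (s : Mo.S),
      Fm.knows a M ∈ Γ → M ∈ Mo.K a s → accMin Mo Γ M a s s) ∧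
    (∀ (M : Msg) (a : Agent) (s t : Mo.S),
      Fm.knows a M ∈ Γ → accMin Mo Γ M a s t → M ∈ Mo.K a t) ∧
    (∀ φ : Fm Agent Msg, (∃ s : Mo.S, sat Mo.acc Mo.K Mo.V s φ) →
      ∃ Mo' : KModel Agent Msg, Finite Mo'.S ∧
        ∃ s' : Mo'.S, sat Mo'.acc Mo'.K Mo'.V s' φ) := by

  refine ⟨?_, ?_, ?_, ?_⟩
  · intro M a s
    obtain ⟨t, ht⟩ := Mo.serial M a s
    exact ⟨t, s, t, fun γ _ => Iff.rfl, fun γ _ => Iff.rfl, ht⟩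
  · intro M a s _ hK
    exact ⟨s, s, fun γ _ => Iff.rfl, fun γ _ => Iff.rfl, Mo.condRefl M a s hK⟩
  · rintro M a s t hk ⟨u, v, hus, hvt, huv⟩
    exact (hvt (.knows a M) hk).mp (Mo.epiImg M a u v huv)
  · rintro φ ⟨s, hs⟩
    refine ⟨LDiiPAux.FMo Mo (LDiiPAux.subL φ), LDiiPAux.fin_FMo _ _,
      Quotient.mk _ s, ?_⟩
    exact (LDiiPAux.filt Mo _ (LDiiPAux.sub_trans φ) φ
      (LDiiPAux.self_mem φ) s).mpr hs
end
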